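/- Prediction-step consistency: suppose ê = X̂ - X satisfies E[ê ê^T] ≤ P, the new state is X⁺ = A X + D u + ω with E[ω ω^T] ≤ Q, ω uncorrelated with ê and with u - û, and the prediction is X̄ = A X̂ + D û where E[(u - û)(u - û)^T] ≤ S. Then for any θ > 0, the prediction error ē = X̄ - X⁺ satisfies E[ē ē^T] ≤ (1+θ) A P A^T + (1 + 1/θ) D S D^T + Q. -/

import Mathlib

open Matrix MeasureTheory

/-- Entrywise expectation of the outer product `X Yᵀ` of two random vectors. -/
noncomputable def Eouter {Ω : Type*} [MeasurableSpace Ω] (μ : Measure Ω) {n m : ℕ}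
    (X : Ω → Fin n → ℝ) (Y : Ω → Fin m → ℝ) : Matrix (Fin n) (Fin m) ℝ :=
  Matrix.of fun i j => ∫ ω, X ω i * Y ω j ∂μ

section Aux

variable {Ω : Type*} [MeasurableSpace Ω] (μ : Measure Ω) {n m q : ℕ}

lemma int_mul2 {f g : Ω → ℝ} (hf : MemLp f 2 μ) (hg : MemLp g 2 μ) :
    Integrable (fun ω => f ω * g ω) μ := by
  have h : MemLp (f • g) 1 μ := hg.smul hf (hpqr := ⟨by rw [ENNReal.inv_two_add_inv_two, inv_one]⟩)
  simpa [smul_eq_mul, Pi.mul_def] using memLp_one_iff_integrable.mp h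

lemma Eouter_comm (Z : Ω → Fin n → ℝ) (W : Ω → Fin m → ℝ) :
    Eouter μ Z W = (Eouter μ W Z)ᵀ := by
  ext i j; simp [Eouter, mul_comm]

lemma Eouter_sub_left (Z Z' : Ω → Fin n → ℝ) (W : Ω → Fin m → ℝ)
    (h1 : ∀ i j, Integrable (fun ω => Z ω i * W ω j) μ)
    (h2 : ∀ i j, Integrable (fun ω => Z' ω i * W ω j) μ) :
    Eouter μ (fun ω => Z ω - Z' ω) W = Eouter μ Z W - Eouter μ Z' W := by
  ext i j
  simp only [Eouter, of_apply, Pi.sub_apply, sub_mul, Matrix.sub_apply]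
  exact integral_sub (h1 i j) (h2 i j)

lemma Eouter_sub_right (Z : Ω → Fin n → ℝ) (W W' : Ω → Fin m → ℝ)
    (h1 : ∀ i j, Integrable (fun ω => Z ω i * W ω j) μ)
    (h2 : ∀ i j, Integrable (fun ω => Z ω i * W' ω j) μ) :
    Eouter μ Z (fun ω => W ω - W' ω) = Eouter μ Z W - Eouter μ Z W' := by
  ext i j
  simp only [Eouter, of_apply, Pi.sub_apply, mul_sub, Matrix.sub_apply]
  exact integral_sub (h1 i j) (h2 i j)

lemma Eouter_add_left (Z Z' : Ω → Fin n → ℝ) (W : Ω → Fin m → ℝ)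
    (h1 : ∀ i j, Integrable (fun ω => Z ω i * W ω j) μ)
    (h2 : ∀ i j, Integrable (fun ω => Z' ω i * W ω j) μ) :
    Eouter μ (fun ω => Z ω + Z' ω) W = Eouter μ Z W + Eouter μ Z' W := by
  ext i j
  simp only [Eouter, of_apply, Pi.add_apply, add_mul, Matrix.add_apply]
  exact integral_add (h1 i j) (h2 i j)

lemma Eouter_add_right (Z : Ω → Fin n → ℝ) (W W' : Ω → Fin m → ℝ)
    (h1 : ∀ i j, Integrable (fun ω => Z ω i * W ω j) μ)
    (h2 : ∀ i j, Integrable (fun ω => Z ω i * W' ω j) μ) :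
    Eouter μ Z (fun ω => W ω + W' ω) = Eouter μ Z W + Eouter μ Z W' := by
  ext i j
  simp only [Eouter, of_apply, Pi.add_apply, mul_add, Matrix.add_apply]
  exact integral_add (h1 i j) (h2 i j)

lemma Eouter_smul_left (c : ℝ) (Z : Ω → Fin n → ℝ) (W : Ω → Fin m → ℝ) :
    Eouter μ (fun ω => c • Z ω) W = c • Eouter μ Z W := by
  ext i j
  simp only [Eouter, of_apply, Pi.smul_apply, smul_eq_mul, Matrix.smul_apply, mul_assoc]
  exact integral_const_mul c _

lemma Eouter_smul_right (c : ℝ) (Z : Ω → Fin n → ℝ) (W : Ω → Fin m → ℝ) :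
    Eouter μ Z (fun ω => c • W ω) = c • Eouter μ Z W := by
  ext i j
  simp only [Eouter, of_apply, Pi.smul_apply, smul_eq_mul, Matrix.smul_apply]
  rw [← integral_const_mul]
  congr 1; funext ω; ring

lemma Eouter_mulVec_left (M : Matrix (Fin q) (Fin n) ℝ) (Z : Ω → Fin n → ℝ)
    (W : Ω → Fin m → ℝ)
    (h : ∀ i j, Integrable (fun ω => Z ω i * W ω j) μ) :
    Eouter μ (fun ω => M.mulVec (Z ω)) W = M * Eouter μ Z W := by
  ext i j
  simp only [Eouter, of_apply, Matrix.mul_apply, mulVec, dotProduct]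
  simp_rw [Finset.sum_mul, mul_assoc]
  rw [integral_finset_sum _ fun k _ => (h k j).const_mul _]
  simp_rw [integral_const_mul]

lemma Eouter_mulVec_right (N : Matrix (Fin q) (Fin m) ℝ) (Z : Ω → Fin n → ℝ)
    (W : Ω → Fin m → ℝ)
    (h : ∀ i j, Integrable (fun ω => Z ω i * W ω j) μ) :
    Eouter μ Z (fun ω => N.mulVec (W ω)) = Eouter μ Z W * Nᵀ := by
  ext i j
  simp only [Eouter, of_apply, Matrix.mul_apply, mulVec, dotProduct, transpose_apply]
  have : ∀ ω, Z ω i * ∑ k, N j k * W ω k = ∑ k, N j k * (Z ω i * W ω k) := by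
    intro ω; rw [Finset.mul_sum]; exact Finset.sum_congr rfl fun k _ => by ring
  simp_rw [this]
  rw [integral_finset_sum _ fun k _ => (h i k).const_mul _]
  simp_rw [integral_const_mul]
  exact Finset.sum_congr rfl fun k _ => by ring

lemma Eouter_psd (Z : Ω → Fin n → ℝ)
    (hZ : ∀ i, MemLp (fun ω => Z ω i) 2 μ) : (Eouter μ Z Z).PosSemidef := by
  rw [posSemidef_iff_dotProduct_mulVec]
  constructor
  · show (Eouter μ Z Z)ᴴ = Eouter μ Z Z
    ext i j
    simp [Eouter, Matrix.conjTranspose_apply, mul_comm]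
  · intro x
    have key : x ⬝ᵥ (Eouter μ Z Z).mulVec x
        = ∫ ω, (∑ i, x i * Z ω i) ^ 2 ∂μ := by
      have expand : ∀ ω : Ω, (∑ i, x i * Z ω i) ^ 2
          = ∑ i, ∑ j, x i * x j * (Z ω i * Z ω j) := by
        intro ω
        rw [sq, Finset.sum_mul_sum]
        exact Finset.sum_congr rfl fun i _ => Finset.sum_congr rfl fun j _ => by ring
      have : (∫ ω, (∑ i, x i * Z ω i) ^ 2 ∂μ)
          = ∑ i, ∑ j, x i * x j * ∫ ω, Z ω i * Z ω j ∂μ := by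
        calc (∫ ω, (∑ i, x i * Z ω i) ^ 2 ∂μ)
            = ∫ ω, ∑ i, ∑ j, x i * x j * (Z ω i * Z ω j) ∂μ := by
              congr 1; funext ω; exact expand ω
          _ = ∑ i, ∑ j, x i * x j * ∫ ω, Z ω i * Z ω j ∂μ := by
              rw [integral_finset_sum _ fun i _ =>
                integrable_finset_sum _ fun j _ =>
                  (int_mul2 μ (hZ i) (hZ j)).const_mul _]
              exact Finset.sum_congr rfl fun i _ => by
                rw [integral_finset_sum _ fun j _ =>
                  (int_mul2 μ (hZ i) (hZ j)).const_mul _]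
                exact Finset.sum_congr rfl fun j _ => integral_const_mul _ _
      rw [this]
      simp only [dotProduct, mulVec, Eouter, of_apply]
      simp_rw [Finset.mul_sum]
      exact Finset.sum_congr rfl fun i _ => Finset.sum_congr rfl fun j _ => by ring
    rw [show star x = x from funext fun i => star_trivial _, key]
    exact integral_nonneg fun ω => sq_nonneg _

lemma psd_smul {k : ℕ} {M : Matrix (Fin k) (Fin k) ℝ} (hM : M.PosSemidef)
    {c : ℝ} (hc : 0 ≤ c) : (c • M).PosSemidef := by
  refine posSemidef_iff_dotProduct_mulVec.mpr ⟨?_, fun x => ?_⟩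
  · show (c • M)ᴴ = c • M
    rw [conjTranspose_smul, star_trivial, hM.1.eq]
  · rw [smul_mulVec, dotProduct_smul, smul_eq_mul]
    exact mul_nonneg hc (hM.dotProduct_mulVec_nonneg x)

end Aux

/-- Prediction-step consistency: if `E[ê êᵀ] ≤ P` for `ê = X̂ - X`, the new state
is `X⁺ = A X + D u + ω₀` with `E[ω₀ ω₀ᵀ] ≤ Q`, `ω₀` uncorrelated with `ê` and
with `u - û`, `E[(u-û)(u-û)ᵀ] ≤ S`, and the prediction is `X̄ = A X̂ + D û`,
then for any `θ > 0` the prediction error `ē = X̄ - X⁺` satisfies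
`E[ē ēᵀ] ≤ (1+θ) A P Aᵀ + (1 + 1/θ) D S Dᵀ + Q`. -/
theorem prediction_step_consistent {Ω : Type*} [MeasurableSpace Ω]
    (μ : Measure Ω) [IsProbabilityMeasure μ] {n p : ℕ}
    (X Xhat w : Ω → Fin n → ℝ) (u : Ω → Fin p → ℝ) (uhat : Fin p → ℝ)
    (hX : ∀ i, MemLp (fun ω => X ω i) 2 μ)
    (hXhat : ∀ i, MemLp (fun ω => Xhat ω i) 2 μ)
    (hw : ∀ i, MemLp (fun ω => w ω i) 2 μ)
    (hu : ∀ j, MemLp (fun ω => u ω j) 2 μ)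
    (A : Matrix (Fin n) (Fin n) ℝ) (D : Matrix (Fin n) (Fin p) ℝ)
    (P Q : Matrix (Fin n) (Fin n) ℝ) (S : Matrix (Fin p) (Fin p) ℝ)
    (hP : P.PosSemidef) (hQ : Q.PosSemidef) (hS : S.PosSemidef)
    (hcons : (P - Eouter μ (fun ω => Xhat ω - X ω)
                (fun ω => Xhat ω - X ω)).PosSemidef)
    (hQw : (Q - Eouter μ w w).PosSemidef)
    (hSu : (S - Eouter μ (fun ω => u ω - uhat)
              (fun ω => u ω - uhat)).PosSemidef)
    (hwe : Eouter μ w (fun ω => Xhat ω - X ω) = 0)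
    (hwu : Eouter μ w (fun ω => u ω - uhat) = 0)
    (θ : ℝ) (hθ : 0 < θ) :
    (((1 + θ) • (A * P * Aᵀ) + (1 + θ⁻¹) • (D * S * Dᵀ) + Q)
      - Eouter μ
          (fun ω => (A.mulVec (Xhat ω) + D.mulVec uhat)
            - (A.mulVec (X ω) + D.mulVec (u ω) + w ω))
          (fun ω => (A.mulVec (Xhat ω) + D.mulVec uhat)
            - (A.mulVec (X ω) + D.mulVec (u ω) + w ω))).PosSemidef := by
  set e : Ω → Fin n → ℝ := fun ω => Xhat ω - X ω with he_def
  set v : Ω → Fin p → ℝ := fun ω => u ω - uhat with hv_def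
  -- L² facts for components
  have he : ∀ i, MemLp (fun ω => e ω i) 2 μ := fun i => (hXhat i).sub (hX i)
  have hv : ∀ j, MemLp (fun ω => v ω j) 2 μ := fun j => (hu j).sub (memLp_const _)
  have hFc : ∀ i, MemLp (fun ω => A.mulVec (e ω) i) 2 μ := by
    intro i
    have : (fun ω => A.mulVec (e ω) i) = fun ω => ∑ k, A i k * e ω k := by
      funext ω; simp [mulVec, dotProduct]
    rw [this]
    exact memLp_finset_sum _ fun k _ => (he k).const_mul _
  have hGc : ∀ i, MemLp (fun ω => D.mulVec (v ω) i) 2 μ := by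
    intro i
    have : (fun ω => D.mulVec (v ω) i) = fun ω => ∑ k, D i k * v ω k := by
      funext ω; simp [mulVec, dotProduct]
    rw [this]
    exact memLp_finset_sum _ fun k _ => (hv k).const_mul _
  have hFGc : ∀ i, MemLp (fun ω => (A.mulVec (e ω) - D.mulVec (v ω)) i) 2 μ :=
    fun i => (hFc i).sub (hGc i)
  have hEc : ∀ i, MemLp (fun ω => (A.mulVec (e ω) - D.mulVec (v ω) - w ω) i) 2 μ :=
    fun i => (hFGc i).sub (hw i)
  -- rewrite the error vector
  have harg : (fun ω => (A.mulVec (Xhat ω) + D.mulVec uhat)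
      - (A.mulVec (X ω) + D.mulVec (u ω) + w ω))
      = fun ω => A.mulVec (e ω) - D.mulVec (v ω) - w ω := by
    funext ω
    simp only [he_def, hv_def, Matrix.mulVec_sub]
    abel
  rw [harg]
  -- basic covariance matrices
  have hew : Eouter μ e w = 0 := by rw [Eouter_comm, hwe, transpose_zero]
  have hvw : Eouter μ v w = 0 := by rw [Eouter_comm, hwu, transpose_zero]
  have hve : Eouter μ v e = (Eouter μ e v)ᵀ := Eouter_comm μ v e
  -- covariances of transformed vectors
  have hFF : Eouter μ (fun ω => A.mulVec (e ω)) (fun ω => A.mulVec (e ω))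
      = A * Eouter μ e e * Aᵀ := by
    rw [Eouter_mulVec_left μ A e _ (fun i j => int_mul2 μ (he i) (hFc j)),
      Eouter_mulVec_right μ A e e (fun i j => int_mul2 μ (he i) (he j)), ← Matrix.mul_assoc]
  have hFG : Eouter μ (fun ω => A.mulVec (e ω)) (fun ω => D.mulVec (v ω))
      = A * Eouter μ e v * Dᵀ := by
    rw [Eouter_mulVec_left μ A e _ (fun i j => int_mul2 μ (he i) (hGc j)),
      Eouter_mulVec_right μ D e v (fun i j => int_mul2 μ (he i) (hv j)), ← Matrix.mul_assoc]
  have hGF : Eouter μ (fun ω => D.mulVec (v ω)) (fun ω => A.mulVec (e ω))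
      = D * (Eouter μ e v)ᵀ * Aᵀ := by
    rw [Eouter_mulVec_left μ D v _ (fun i j => int_mul2 μ (hv i) (hFc j)),
      Eouter_mulVec_right μ A v e (fun i j => int_mul2 μ (hv i) (he j)), hve, ← Matrix.mul_assoc]
  have hGG : Eouter μ (fun ω => D.mulVec (v ω)) (fun ω => D.mulVec (v ω))
      = D * Eouter μ v v * Dᵀ := by
    rw [Eouter_mulVec_left μ D v _ (fun i j => int_mul2 μ (hv i) (hGc j)),
      Eouter_mulVec_right μ D v v (fun i j => int_mul2 μ (hv i) (hv j)), ← Matrix.mul_assoc]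
  have hFw : Eouter μ (fun ω => A.mulVec (e ω)) w = 0 := by
    rw [Eouter_mulVec_left μ A e w (fun i j => int_mul2 μ (he i) (hw j)), hew, Matrix.mul_zero]
  have hGw : Eouter μ (fun ω => D.mulVec (v ω)) w = 0 := by
    rw [Eouter_mulVec_left μ D v w (fun i j => int_mul2 μ (hv i) (hw j)), hvw, Matrix.mul_zero]
  have hwF : Eouter μ w (fun ω => A.mulVec (e ω)) = 0 := by
    rw [Eouter_comm, hFw, transpose_zero]
  have hwG : Eouter μ w (fun ω => D.mulVec (v ω)) = 0 := by
    rw [Eouter_comm, hGw, transpose_zero]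
  -- expansion of the prediction-error covariance
  have hEbar : Eouter μ (fun ω => A.mulVec (e ω) - D.mulVec (v ω) - w ω)
      (fun ω => A.mulVec (e ω) - D.mulVec (v ω) - w ω)
      = A * Eouter μ e e * Aᵀ - A * Eouter μ e v * Dᵀ - D * (Eouter μ e v)ᵀ * Aᵀ
        + D * Eouter μ v v * Dᵀ + Eouter μ w w := by
    rw [Eouter_sub_left μ (fun ω => A.mulVec (e ω) - D.mulVec (v ω)) w _
        (fun i j => int_mul2 μ (hFGc i) (hEc j)) (fun i j => int_mul2 μ (hw i) (hEc j)),
      Eouter_sub_left μ (fun ω => A.mulVec (e ω)) (fun ω => D.mulVec (v ω)) _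
        (fun i j => int_mul2 μ (hFc i) (hEc j)) (fun i j => int_mul2 μ (hGc i) (hEc j)),
      Eouter_sub_right μ (fun ω => A.mulVec (e ω)) (fun ω => A.mulVec (e ω) - D.mulVec (v ω)) w
        (fun i j => int_mul2 μ (hFc i) (hFGc j)) (fun i j => int_mul2 μ (hFc i) (hw j)),
      Eouter_sub_right μ (fun ω => A.mulVec (e ω)) (fun ω => A.mulVec (e ω)) (fun ω => D.mulVec (v ω))
        (fun i j => int_mul2 μ (hFc i) (hFc j)) (fun i j => int_mul2 μ (hFc i) (hGc j)),
      Eouter_sub_right μ (fun ω => D.mulVec (v ω)) (fun ω => A.mulVec (e ω) - D.mulVec (v ω)) w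
        (fun i j => int_mul2 μ (hGc i) (hFGc j)) (fun i j => int_mul2 μ (hGc i) (hw j)),
      Eouter_sub_right μ (fun ω => D.mulVec (v ω)) (fun ω => A.mulVec (e ω)) (fun ω => D.mulVec (v ω))
        (fun i j => int_mul2 μ (hGc i) (hFc j)) (fun i j => int_mul2 μ (hGc i) (hGc j)),
      Eouter_sub_right μ w (fun ω => A.mulVec (e ω) - D.mulVec (v ω)) w
        (fun i j => int_mul2 μ (hw i) (hFGc j)) (fun i j => int_mul2 μ (hw i) (hw j)),
      Eouter_sub_right μ w (fun ω => A.mulVec (e ω)) (fun ω => D.mulVec (v ω))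
        (fun i j => int_mul2 μ (hw i) (hFc j)) (fun i j => int_mul2 μ (hw i) (hGc j)),
      hFF, hFG, hGF, hGG, hFw, hGw, hwF, hwG]
    abel
  -- the auxiliary (Young) vector
  set c : ℝ := Real.sqrt θ with hc_def
  have hc0 : 0 < c := Real.sqrt_pos.mpr hθ
  have hcc : c * c = θ := Real.mul_self_sqrt hθ.le
  have hZc : ∀ i, MemLp
      (fun ω => (c • A.mulVec (e ω) + c⁻¹ • D.mulVec (v ω)) i) 2 μ :=
    fun i => ((hFc i).const_mul c).add ((hGc i).const_mul c⁻¹)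
  have hcFc : ∀ i, MemLp (fun ω => (c • A.mulVec (e ω)) i) 2 μ :=
    fun i => (hFc i).const_mul c
  have hcGc : ∀ i, MemLp (fun ω => (c⁻¹ • D.mulVec (v ω)) i) 2 μ :=
    fun i => (hGc i).const_mul c⁻¹
  have hZZ : Eouter μ (fun ω => c • A.mulVec (e ω) + c⁻¹ • D.mulVec (v ω))
      (fun ω => c • A.mulVec (e ω) + c⁻¹ • D.mulVec (v ω))
      = θ • (A * Eouter μ e e * Aᵀ) + (A * Eouter μ e v * Dᵀ + D * (Eouter μ e v)ᵀ * Aᵀ)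
        + θ⁻¹ • (D * Eouter μ v v * Dᵀ) := by
    rw [Eouter_add_left μ (fun ω => c • A.mulVec (e ω)) (fun ω => c⁻¹ • D.mulVec (v ω)) _
        (fun i j => int_mul2 μ (hcFc i) (hZc j)) (fun i j => int_mul2 μ (hcGc i) (hZc j)),
      Eouter_add_right μ (fun ω => c • A.mulVec (e ω)) (fun ω => c • A.mulVec (e ω))
        (fun ω => c⁻¹ • D.mulVec (v ω))
        (fun i j => int_mul2 μ (hcFc i) (hcFc j)) (fun i j => int_mul2 μ (hcFc i) (hcGc j)),
      Eouter_add_right μ (fun ω => c⁻¹ • D.mulVec (v ω)) (fun ω => c • A.mulVec (e ω))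
        (fun ω => c⁻¹ • D.mulVec (v ω))
        (fun i j => int_mul2 μ (hcGc i) (hcFc j)) (fun i j => int_mul2 μ (hcGc i) (hcGc j))]
    simp only [Eouter_smul_left, Eouter_smul_right, smul_smul]
    rw [hFF, hFG, hGF, hGG, ← mul_inv, hcc, mul_inv_cancel₀ hc0.ne',
      inv_mul_cancel₀ hc0.ne', one_smul, one_smul]
    abel
  -- the key algebraic identity
  have key : ((1 + θ) • (A * P * Aᵀ) + (1 + θ⁻¹) • (D * S * Dᵀ) + Q)
      - Eouter μ (fun ω => A.mulVec (e ω) - D.mulVec (v ω) - w ω)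
          (fun ω => A.mulVec (e ω) - D.mulVec (v ω) - w ω)
      = (1 + θ) • (A * (P - Eouter μ e e) * Aᵀ)
        + (1 + θ⁻¹) • (D * (S - Eouter μ v v) * Dᵀ)
        + (Q - Eouter μ w w)
        + Eouter μ (fun ω => c • A.mulVec (e ω) + c⁻¹ • D.mulVec (v ω))
            (fun ω => c • A.mulVec (e ω) + c⁻¹ • D.mulVec (v ω)) := by
    rw [hEbar, hZZ, Matrix.mul_sub, Matrix.sub_mul, Matrix.mul_sub, Matrix.sub_mul]
    module
  rw [key]
  -- positivity of each summand
  have p1 := hcons.mul_mul_conjTranspose_same A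
  rw [conjTranspose_eq_transpose_of_trivial] at p1
  have p2 := hSu.mul_mul_conjTranspose_same D
  rw [conjTranspose_eq_transpose_of_trivial] at p2
  have p4 := Eouter_psd μ _ hZc
  exact (((psd_smul p1 (by positivity)).add (psd_smul p2 (by positivity))).add hQw).add p4
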